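/- The function L₁ : ℝ^{2×2} → ℝ defined by L₁ = L ∘ α is rank one convex: for every pair of real 2×2 matrices A, B with rank B ≤ 1, the map t ↦ L₁(A + tB) is convex on ℝ. -/

import Mathlib

/-- The Burkholder–Šverák function L. -/
noncomputable def L (z w : ℂ) : ℝ :=
  if ‖z‖ + ‖w‖ ≤ 1 then (‖z‖) ^ 2 - (‖w‖) ^ 2
  else 2 * ‖z‖ - 1

/-- First component of α : ℝ^{2×2} → ℂ². -/
noncomputable def alpha1 (A : Matrix (Fin 2) (Fin 2) ℝ) : ℂ :=
  (1 / 2 : ℂ) * (((A 0 0 + A 1 1 : ℝ) : ℂ) + ((A 1 0 - A 0 1 : ℝ) : ℂ) * Complex.I)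

/-- Second component of α : ℝ^{2×2} → ℂ². -/
noncomputable def alpha2 (A : Matrix (Fin 2) (Fin 2) ℝ) : ℂ :=
  (1 / 2 : ℂ) * (((A 0 0 - A 1 1 : ℝ) : ℂ) + ((A 1 0 + A 0 1 : ℝ) : ℂ) * Complex.I)

/-- L₁ = L ∘ α. -/
noncomputable def L1 (A : Matrix (Fin 2) (Fin 2) ℝ) : ℝ := L (alpha1 A) (alpha2 A)

lemma alpha1_add_smul (A B : Matrix (Fin 2) (Fin 2) ℝ) (t : ℝ) :
    alpha1 (A + t • B) = alpha1 A + (t : ℂ) * alpha1 B := by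
  simp only [alpha1, Matrix.add_apply, Matrix.smul_apply, smul_eq_mul]
  push_cast
  ring

lemma alpha2_add_smul (A B : Matrix (Fin 2) (Fin 2) ℝ) (t : ℝ) :
    alpha2 (A + t • B) = alpha2 A + (t : ℂ) * alpha2 B := by
  simp only [alpha2, Matrix.add_apply, Matrix.smul_apply, smul_eq_mul]
  push_cast
  ring

lemma normSq_alpha (B : Matrix (Fin 2) (Fin 2) ℝ) :
    Complex.normSq (alpha1 B) - Complex.normSq (alpha2 B) = B.det := by
  rw [Matrix.det_fin_two]
  simp [alpha1, alpha2, Complex.normSq_apply, Complex.add_re, Complex.add_im,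
    Complex.mul_re, Complex.mul_im]
  ring

lemma det_zero_of_rank_le_one (B : Matrix (Fin 2) (Fin 2) ℝ) (hB : B.rank ≤ 1) : B.det = 0 := by
  by_contra h
  have hu : IsUnit B := (Matrix.isUnit_iff_isUnit_det B).2 (isUnit_iff_ne_zero.2 h)
  have := Matrix.rank_of_isUnit B hu
  rw [this] at hB
  simp at hB

lemma convexOn_affine (c d : ℝ) : ConvexOn ℝ Set.univ (fun t : ℝ => c * t + d) := by
  refine ⟨convex_univ, ?_⟩
  intro x _ y _ p q hp hq hpq
  simp only [smul_eq_mul]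
  refine le_of_eq ?_
  linear_combination (-d) * hpq

lemma convexOn_habs (z b : ℂ) :
    ConvexOn ℝ Set.univ (fun t : ℝ => 2 * ‖z + (t : ℂ) * b‖ - 1) := by
  refine ⟨convex_univ, ?_⟩
  intro x _ y _ p q hp hq hpq
  simp only [smul_eq_mul]
  have hpq' : (p : ℂ) + (q : ℂ) = 1 := by exact_mod_cast hpq
  have heq : z + ((p * x + q * y : ℝ) : ℂ) * b
      = (p : ℂ) * (z + (x : ℂ) * b) + (q : ℂ) * (z + (y : ℂ) * b) := by
    push_cast
    linear_combination (-z) * hpq'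
  have key : ‖z + ((p * x + q * y : ℝ) : ℂ) * b‖
      ≤ p * ‖z + (x : ℂ) * b‖ + q * ‖z + (y : ℂ) * b‖ := by
    rw [heq]
    calc ‖(p : ℂ) * (z + (x : ℂ) * b) + (q : ℂ) * (z + (y : ℂ) * b)‖
        ≤ ‖(p : ℂ) * (z + (x : ℂ) * b)‖ + ‖(q : ℂ) * (z + (y : ℂ) * b)‖ :=
          norm_add_le _ _
      _ = p * ‖z + (x : ℂ) * b‖ + q * ‖z + (y : ℂ) * b‖ := by
          rw [norm_mul, norm_mul, Complex.norm_of_nonneg hp,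
            Complex.norm_of_nonneg hq]
  nlinarith [key]

/-- L₁ is rank one convex. -/
theorem stmt3 (A B : Matrix (Fin 2) (Fin 2) ℝ) (hB : B.rank ≤ 1) :
    ConvexOn ℝ Set.univ (fun t : ℝ => L1 (A + t • B)) := by
  set z1 := alpha1 A with hz1
  set z2 := alpha2 A with hz2
  set b1 := alpha1 B with hb1
  set b2 := alpha2 B with hb2
  have hdet : B.det = 0 := det_zero_of_rank_le_one B hB
  have hnsq : Complex.normSq b1 = Complex.normSq b2 := by
    have h := normSq_alpha B
    rw [hdet] at h
    linarith
  have hfeq : ∀ t : ℝ, L1 (A + t • B) = L (z1 + (t : ℂ) * b1) (z2 + (t : ℂ) * b2) := by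
    intro t
    rw [L1, alpha1_add_smul, alpha2_add_smul]
  by_cases hb : b2 = 0
  · have hb10 : b1 = 0 := by
      have h0 : Complex.normSq b1 = 0 := by rw [hnsq, hb, map_zero]
      exact Complex.normSq_eq_zero.mp h0
    have hc : ∀ t : ℝ, L1 (A + t • B) = L z1 z2 := by
      intro t
      rw [hfeq, hb10, hb]
      simp
    simp only [hc]
    exact convexOn_const _ convex_univ
  · -- b2 ≠ 0; set lam = b1 / b2 which is unimodular
    set lam := b1 / b2 with hlamdef
    have habs_eq : ‖b1‖ = ‖b2‖ := by
      have : Real.sqrt (Complex.normSq b1) = Real.sqrt (Complex.normSq b2) := by rw [hnsq]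
      rwa [← Complex.norm_def, ← Complex.norm_def] at this
    have hlam : b1 = lam * b2 := (div_mul_cancel₀ _ hb).symm
    have hlamabs : ‖lam‖ = 1 := by
      rw [hlamdef, norm_div, habs_eq, div_self]
      exact norm_ne_zero_iff.mpr hb
    -- key constancy: (z1 + t b1) - lam * (z2 + t b2) = z1 - lam * z2
    have hconst : ∀ t : ℝ, (z1 + (t : ℂ) * b1) - lam * (z2 + (t : ℂ) * b2) = z1 - lam * z2 := by
      intro t
      rw [hlam]
      ring
    -- pointwise bound: |z1 + t b1| - |z2 + t b2| ≤ |z1 - lam z2|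
    have hpsi : ∀ t : ℝ, ‖z1 + (t : ℂ) * b1‖ - ‖z2 + (t : ℂ) * b2‖
        ≤ ‖z1 - lam * z2‖ := by
      intro t
      have h1 : ‖z1 + (t : ℂ) * b1‖
          ≤ ‖(z1 + (t : ℂ) * b1) - lam * (z2 + (t : ℂ) * b2)‖
            + ‖lam * (z2 + (t : ℂ) * b2)‖ := by
        calc ‖z1 + (t : ℂ) * b1‖
            = ‖((z1 + (t : ℂ) * b1) - lam * (z2 + (t : ℂ) * b2))
              + lam * (z2 + (t : ℂ) * b2)‖ := by ring_nf
          _ ≤ _ := norm_add_le _ _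
      rw [hconst, norm_mul, hlamabs, one_mul] at h1
      linarith
    -- affine representation of g
    set c : ℝ := 2 * (z1.re * b1.re + z1.im * b1.im - z2.re * b2.re - z2.im * b2.im) with hc
    set d : ℝ := Complex.normSq z1 - Complex.normSq z2 with hd
    have gaff : ∀ t : ℝ, (‖z1 + (t : ℂ) * b1‖) ^ 2
        - (‖z2 + (t : ℂ) * b2‖) ^ 2 = c * t + d := by
      intro t
      rw [Complex.sq_norm, Complex.sq_norm]
      have hq := hnsq
      simp only [Complex.normSq_apply, Complex.add_re, Complex.add_im, Complex.mul_re,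
        Complex.mul_im, Complex.ofReal_re, Complex.ofReal_im, hc, hd] at *
      linear_combination t ^ 2 * hq
    by_cases hI : ∃ s : ℝ, ‖z1 + (s : ℂ) * b1‖ + ‖z2 + (s : ℂ) * b2‖ ≤ 1
    · obtain ⟨s, hs⟩ := hI
      -- C ≤ 1
      have hC : ‖z1 - lam * z2‖ ≤ 1 := by
        have h1 : ‖z1 - lam * z2‖
            ≤ ‖z1 + (s : ℂ) * b1‖ + ‖lam * (z2 + (s : ℂ) * b2)‖ := by
          rw [← hconst s]
          exact norm_sub_le _ _ |>.trans (le_refl _) |>.trans (le_refl _)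
        rw [norm_mul, hlamabs, one_mul] at h1
        linarith
      -- max representation
      have hmax : ∀ t : ℝ, L (z1 + (t : ℂ) * b1) (z2 + (t : ℂ) * b2)
          = max (c * t + d) (2 * ‖z1 + (t : ℂ) * b1‖ - 1) := by
        intro t
        set u := ‖z1 + (t : ℂ) * b1‖ with hu
        set v := ‖z2 + (t : ℂ) * b2‖ with hv
        have hu0 : 0 ≤ u := norm_nonneg _
        have hv0 : 0 ≤ v := norm_nonneg _
        have hg := gaff t
        rw [L]
        by_cases hφ : u + v ≤ 1
        · rw [if_pos hφ, ← hg]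
          refine (max_eq_left ?_).symm
          nlinarith
        · rw [if_neg hφ, ← hg]
          push_neg at hφ
          refine (max_eq_right ?_).symm
          have h2 : u - v ≤ 1 := le_trans (hpsi t) hC
          nlinarith
      have : (fun t : ℝ => L1 (A + t • B))
          = fun t : ℝ => max (c * t + d) (2 * ‖z1 + (t : ℂ) * b1‖ - 1) := by
        funext t
        rw [hfeq, hmax]
      rw [this]
      exact (convexOn_affine c d).sup (convexOn_habs z1 b1)
    · push_neg at hI
      have : (fun t : ℝ => L1 (A + t • B))
          = fun t : ℝ => 2 * ‖z1 + (t : ℂ) * b1‖ - 1 := by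
        funext t
        rw [hfeq, L, if_neg (not_le.mpr (hI t))]
      rw [this]
      exact convexOn_habs z1 b1
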